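/- Let G be a finite group, N a subgroup of index 2 in G, H a subgroup of N, and c an element of order 2 in G not lying in N. Then the number of elements of the double coset HcH whose square lies in H is exactly |H|. -/
import Mathlib

theorem stmt1 (G : Type*) [Group G] [Fintype G] (N H : Subgroup G)
    (hN : N.index = 2) (hHN : H ≤ N) (c : G) (hc2 : c ^ 2 = 1)
    (hcN : c ∉ N) :
    Nat.card {g : G | (∃ h₁ ∈ H, ∃ h₂ ∈ H, g = h₁ * c * h₂) ∧ g ^ 2 ∈ H}
      = Nat.card H := by
  classical
  have hcc : c * c = 1 := by rw [← sq]; exact hc2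
  have hci : c⁻¹ = c := inv_eq_of_mul_eq_one_right hcc
  have hccl : ∀ x : G, c * (c * x) = x := fun x => by rw [← mul_assoc, hcc, one_mul]
  set P : G → Prop := fun g => (∃ h₁ ∈ H, ∃ h₂ ∈ H, g = h₁ * c * h₂) ∧ g ^ 2 ∈ H with hP
  set K : Finset G := Finset.univ.filter (fun k => k ∈ H ∧ c * k * c ∈ H) with hKdef
  set T : Finset (G × G) :=
    Finset.univ.filter (fun p => p.1 ∈ H ∧ p.2 ∈ H ∧ c * (p.2 * p.1) * c ∈ H) with hTdef
  set S : Finset G := Finset.univ.filter P with hSdef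
  have hmemK : ∀ k : G, k ∈ K ↔ k ∈ H ∧ c * k * c ∈ H := by
    intro k; simp [hKdef]
  have hmemT : ∀ p : G × G, p ∈ T ↔ p.1 ∈ H ∧ p.2 ∈ H ∧ c * (p.2 * p.1) * c ∈ H := by
    intro p; simp [hTdef]
  have hmemS : ∀ g : G, g ∈ S ↔ P g := by intro g; simp [hSdef]
  -- the map T → S
  have hmap : ∀ p ∈ T, p.1 * c * p.2 ∈ S := by
    intro p hp
    rw [hmemT] at hp
    obtain ⟨ha, hb, hcbac⟩ := hp
    rw [hmemS]
    constructor
    · exact ⟨p.1, ha, p.2, hb, rfl⟩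
    · have : (p.1 * c * p.2) ^ 2 = p.1 * (c * (p.2 * p.1) * c) * p.2 := by
        rw [sq]; simp [mul_assoc]
      rw [this]
      exact H.mul_mem (H.mul_mem ha hcbac) hb
  -- fiber cardinality
  have hfiber : ∀ g ∈ S, (T.filter (fun p => p.1 * c * p.2 = g)).card = K.card := by
    intro g hg
    rw [hmemS] at hg
    obtain ⟨⟨a, ha, b, hb, rfl⟩, hg2⟩ := hg
    have hcbac : c * (b * a) * c ∈ H := by
      have h1 : c * (b * a) * c = a⁻¹ * (a * c * b) ^ 2 * b⁻¹ := by
        rw [sq]; simp [mul_assoc]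
      rw [h1]
      exact H.mul_mem (H.mul_mem (H.inv_mem ha) hg2) (H.inv_mem hb)
    refine Finset.card_bij' (fun p _ => a⁻¹ * p.1) (fun k _ => (a * k, c * k⁻¹ * c * b))
      ?_ ?_ ?_ ?_
    · -- forward: fiber → K
      intro p hp
      rw [Finset.mem_filter] at hp
      obtain ⟨hpT, hpeq⟩ := hp
      rw [hmemT] at hpT
      obtain ⟨hp1, hp2, _⟩ := hpT
      rw [hmemK]
      refine ⟨H.mul_mem (H.inv_mem ha) hp1, ?_⟩
      have hp1' : p.1 = a * c * b * p.2⁻¹ * c := by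
        rw [← hpeq]; simp [mul_assoc, hcc]
      have : c * (a⁻¹ * p.1) * c = b * p.2⁻¹ := by
        rw [hp1']; simp [mul_assoc, hccl, hcc]
      rw [this]
      exact H.mul_mem hb (H.inv_mem hp2)
    · -- backward: K → fiber
      intro k hk
      rw [hmemK] at hk
      obtain ⟨hkH, hckc⟩ := hk
      have hckic : c * k⁻¹ * c ∈ H := by
        have : c * k⁻¹ * c = (c * k * c)⁻¹ := by simp [mul_inv_rev, hci, mul_assoc]
        rw [this]; exact H.inv_mem hckc
      rw [Finset.mem_filter]
      constructor
      · rw [hmemT]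
        refine ⟨H.mul_mem ha hkH, H.mul_mem hckic hb, ?_⟩
        have : c * (c * k⁻¹ * c * b * (a * k)) * c = k⁻¹ * (c * (b * a) * c) * (c * k * c) := by
          simp [mul_assoc, hccl]
        rw [this]
        exact H.mul_mem (H.mul_mem (H.inv_mem hkH) hcbac) hckc
      · show a * k * c * (c * k⁻¹ * c * b) = a * c * b
        simp [mul_assoc, hccl]
    · -- left inverse
      intro p hp
      rw [Finset.mem_filter] at hp
      obtain ⟨_, hpeq⟩ := hp
      have hp2 : c * (a⁻¹ * p.1)⁻¹ * c * b = p.2 := by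
        have h2 : p.2 = c * (p.1⁻¹ * (a * c * b)) := by
          rw [← hpeq]; simp [mul_assoc, hccl]
        rw [h2]; simp [mul_assoc, hccl, mul_inv_rev]
      rw [Prod.ext_iff]
      exact ⟨by simp [mul_assoc], hp2⟩
    · -- right inverse
      intro k _
      show a⁻¹ * (a * k) = k
      simp [mul_assoc]
  -- |T| = |S| * |K|
  have hTS : T.card = S.card * K.card := by
    rw [Finset.card_eq_sum_card_fiberwise hmap]
    rw [Finset.sum_congr rfl hfiber, Finset.sum_const, smul_eq_mul]
  -- |T| = |H| * |K|
  set HF : Finset G := Finset.univ.filter (· ∈ H) with hHFdef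
  have hTH : T.card = HF.card * K.card := by
    rw [← Finset.card_product]
    refine Finset.card_bij' (fun p _ => (p.1, p.2 * p.1)) (fun q _ => (q.1, q.2 * q.1⁻¹))
      ?_ ?_ ?_ ?_
    · intro p hp
      rw [hmemT] at hp
      obtain ⟨hp1, hp2, hp3⟩ := hp
      rw [Finset.mem_product]
      refine ⟨by simp [hHFdef, hp1], ?_⟩
      rw [hmemK]
      exact ⟨H.mul_mem hp2 hp1, hp3⟩
    · intro q hq
      rw [Finset.mem_product] at hq
      obtain ⟨hq1, hq2⟩ := hq
      rw [hmemK] at hq2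
      simp only [hHFdef, Finset.mem_filter] at hq1
      rw [hmemT]
      refine ⟨hq1.2, H.mul_mem hq2.1 (H.inv_mem hq1.2), ?_⟩
      have : (q.2 * q.1⁻¹ * q.1) = q.2 := by simp [mul_assoc]
      rw [this]
      exact hq2.2
    · intro p _; rw [Prod.ext_iff]; constructor <;> simp [mul_assoc]
    · intro q _; rw [Prod.ext_iff]; constructor <;> simp [mul_assoc]
  -- K is nonempty
  have hKpos : 0 < K.card := by
    rw [Finset.card_pos]
    exact ⟨1, by rw [hmemK]; simpa [hcc] using H.one_mem⟩
  have hcard : S.card = HF.card := Nat.eq_of_mul_eq_mul_right hKpos (by rw [← hTS, hTH])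
  have h1 : Nat.card {g : G | P g} = S.card := by
    simp [hSdef, Nat.card_eq_fintype_card, Fintype.card_subtype]
  have h2 : Nat.card H = HF.card := by
    simp [hHFdef, Nat.card_eq_fintype_card, Fintype.card_subtype]
  rw [show {g : G | (∃ h₁ ∈ H, ∃ h₂ ∈ H, g = h₁ * c * h₂) ∧ g ^ 2 ∈ H} = {g : G | P g} from rfl]
  rw [h1, h2, hcard]
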